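/- arXiv:2407.20913 — 2 statements merged into one kernel-verified Lean document; each statement's English description precedes it below -/
import Mathlib

section
/- Theorem 4.2, case B2. In addition to the common setup, assume b11 = b12, σ11 = σ12, b21 = b22, σ21 = σ22, and K₁ := K_{11} = K_{12} < K_{21} = K_{22} =: K₂; assume c12 < 0, c21 > 0, χ12 > 0, χ21 > 0 and c12 + c21 > 0 (Condition B2). Then the quadruple v11(x) = K₂·x^γ − c12, v12(x) = K₂·x^γ − c12, v21(x) = K₂·x^γ, v22(x) = K₂·x^γ solves the QVI system at every x > 0. -/
/-- Generator of a one-dimensional geometric Brownian motion with drift `b` and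
volatility `σ`: `(L v)(x) = (1/2)σ²x²v''(x) + b x v'(x)`. -/
noncomputable def Lop (b σ : ℝ) (v : ℝ → ℝ) (x : ℝ) : ℝ :=
  (1/2) * σ^2 * x^2 * deriv (deriv v) x + b * x * deriv v x

/-- The quadruple `(v11, v12, v21, v22)` solves the Isaacs system of
quasi-variational inequalities at the point `x`, with profit `f(x) = x^γ`. -/
def solvesQVI (r γ c12 c21 χ12 χ21 b11 σ11 b12 σ12 b21 σ21 b22 σ22 : ℝ)
    (v11 v12 v21 v22 : ℝ → ℝ) (x : ℝ) : Prop :=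
  max (min (r * v11 x - Lop b11 σ11 v11 x - x ^ γ) (v11 x - (v21 x - c12)))
      (v11 x - (v12 x + χ12)) = 0 ∧
  max (min (r * v12 x - Lop b12 σ12 v12 x - x ^ γ) (v12 x - (v22 x - c12)))
      (v12 x - (v11 x + χ21)) = 0 ∧
  max (min (r * v21 x - Lop b21 σ21 v21 x - x ^ γ) (v21 x - (v11 x - c21)))
      (v21 x - (v22 x + χ12)) = 0 ∧
  max (min (r * v22 x - Lop b22 σ22 v22 x - x ^ γ) (v22 x - (v12 x - c21)))
      (v22 x - (v21 x + χ21)) = 0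

lemma deriv1 (K c γ : ℝ) {x : ℝ} (hx : 0 < x) :
    deriv (fun y : ℝ => K * y ^ γ - c) x = K * γ * x ^ (γ - 1) := by
  have h := (Real.hasDerivAt_rpow_const (x := x) (p := γ) (Or.inl hx.ne')).const_mul K
  have h2 := h.sub_const c
  rw [h2.deriv]; ring

lemma deriv2 (K c γ : ℝ) {x : ℝ} (hx : 0 < x) :
    deriv (deriv (fun y : ℝ => K * y ^ γ - c)) x = K * γ * (γ - 1) * x ^ (γ - 2) := by
  have hev : deriv (fun y : ℝ => K * y ^ γ - c) =ᶠ[nhds x] fun y => K * γ * y ^ (γ - 1) := by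
    filter_upwards [isOpen_Ioi.mem_nhds hx] with y hy
    exact deriv1 K c γ hy
  rw [hev.deriv_eq]
  have h := (Real.hasDerivAt_rpow_const (x := x) (p := γ - 1) (Or.inl hx.ne')).const_mul (K * γ)
  rw [h.deriv]
  have : γ - 1 - 1 = γ - 2 := by ring
  rw [this]; ring

lemma lop_calc (r b σ K c γ : ℝ) {x : ℝ} (hx : 0 < x) :
    r * (K * x ^ γ - c) - Lop b σ (fun y => K * y ^ γ - c) x - x ^ γ
      = (K * (r - b * γ + (1/2) * σ^2 * γ * (1 - γ)) - 1) * x ^ γ - r * c := by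
  unfold Lop
  rw [deriv1 K c γ hx, deriv2 K c γ hx]
  have h1 : x ^ 2 * x ^ (γ - 2) = x ^ γ := by
    rw [← Real.rpow_natCast x 2, ← Real.rpow_add hx]; norm_num
  have h2 : x * x ^ (γ - 1) = x ^ γ := by
    nth_rewrite 1 [← Real.rpow_one x]
    rw [← Real.rpow_add hx]; norm_num
  linear_combination (-(1/2*σ^2*K*γ*(γ-1)))*h1 - b*K*γ*h2

set_option maxHeartbeats 1000000 in
theorem thm4_2_B2
    (r γ c12 c21 χ12 χ21 : ℝ)
    (b11 σ11 b12 σ12 b21 σ21 b22 σ22 : ℝ)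
    (K11 K12 K21 K22 : ℝ)
    (hr : 0 < r) (hγ0 : 0 < γ) (hγ1 : γ < 1)
    (hσ11 : 0 < σ11) (hσ12 : 0 < σ12) (hσ21 : 0 < σ21) (hσ22 : 0 < σ22)
    (hd11 : 0 < r - b11*γ + (1/2)*σ11^2*γ*(1-γ))
    (hd12 : 0 < r - b12*γ + (1/2)*σ12^2*γ*(1-γ))
    (hd21 : 0 < r - b21*γ + (1/2)*σ21^2*γ*(1-γ))
    (hd22 : 0 < r - b22*γ + (1/2)*σ22^2*γ*(1-γ))
    (hrb11 : b11 < r) (hrb12 : b12 < r) (hrb21 : b21 < r) (hrb22 : b22 < r)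
    (hK11 : K11 = 1/(r - b11*γ + (1/2)*σ11^2*γ*(1-γ)))
    (hK12 : K12 = 1/(r - b12*γ + (1/2)*σ12^2*γ*(1-γ)))
    (hK21 : K21 = 1/(r - b21*γ + (1/2)*σ21^2*γ*(1-γ)))
    (hK22 : K22 = 1/(r - b22*γ + (1/2)*σ22^2*γ*(1-γ)))
    (heqb12 : b12 = b11) (heqσ12 : σ12 = σ11)
    (heqb22 : b22 = b21) (heqσ22 : σ22 = σ21)
    (K₁ K₂ : ℝ) (hK₁ : K₁ = K11) (hK₂ : K₂ = K21)
    (hKlt : K₁ < K₂)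
    (hc12 : c12 < 0) (hc21 : 0 < c21) (hχ12 : 0 < χ12) (hχ21 : 0 < χ21)
    (hcsum : 0 < c12 + c21)
    :
    ∀ x : ℝ, 0 < x →
      solvesQVI r γ c12 c21 χ12 χ21 b11 σ11 b12 σ12 b21 σ21 b22 σ22
        (fun y => K₂ * y ^ γ - c12)
        (fun y => K₂ * y ^ γ - c12)
        (fun y => K₂ * y ^ γ)
        (fun y => K₂ * y ^ γ) x := by
  intro x hx
  have hxγ : (0:ℝ) < x ^ γ := Real.rpow_pos_of_pos hx γ
  have hf0 : (fun y : ℝ => K₂ * y ^ γ) = fun y => K₂ * y ^ γ - 0 := by funext y; ring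
  have hK2 : K₂ = 1/(r - b21*γ + (1/2)*σ21^2*γ*(1-γ)) := by rw [hK₂, hK21]
  have hK1 : K₁ = 1/(r - b11*γ + (1/2)*σ11^2*γ*(1-γ)) := by rw [hK₁, hK11]
  have hK2D21 : K₂ * (r - b21*γ + (1/2)*σ21^2*γ*(1-γ)) = 1 := by
    rw [hK2]; exact one_div_mul_cancel hd21.ne'
  have hDlt : r - b21*γ + (1/2)*σ21^2*γ*(1-γ) < r - b11*γ + (1/2)*σ11^2*γ*(1-γ) := by
    rw [hK1, hK2] at hKlt
    have := (div_lt_div_iff₀ hd11 hd21).mp hKlt; linarith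
  have hK2pos : 0 < K₂ := by rw [hK2]; positivity
  have hK2D11 : 1 < K₂ * (r - b11*γ + (1/2)*σ11^2*γ*(1-γ)) := by
    nlinarith [mul_pos hK2pos (sub_pos.mpr hDlt)]
  unfold solvesQVI
  beta_reduce
  refine ⟨?_, ?_, ?_, ?_⟩
  · have e1 : min (r * (K₂ * x ^ γ - c12) - Lop b11 σ11 (fun y => K₂ * y ^ γ - c12) x - x ^ γ)
        ((K₂ * x ^ γ - c12) - ((K₂ * x ^ γ) - c12)) = 0 := by
      rw [lop_calc r b11 σ11 K₂ c12 γ hx]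
      have h0 : (K₂ * x ^ γ - c12) - ((K₂ * x ^ γ) - c12) = 0 := by ring
      have hA : 0 ≤ (K₂ * (r - b11*γ + (1/2)*σ11^2*γ*(1-γ)) - 1) * x ^ γ - r * c12 := by
        have h1 : 0 < (K₂ * (r - b11*γ + (1/2)*σ11^2*γ*(1-γ)) - 1) * x ^ γ :=
          mul_pos (by linarith) hxγ
        nlinarith [mul_neg_of_pos_of_neg hr hc12]
      rw [h0, min_eq_right hA]
    rw [e1]
    rw [max_eq_left (by linarith)]
  · have e1 : min (r * (K₂ * x ^ γ - c12) - Lop b12 σ12 (fun y => K₂ * y ^ γ - c12) x - x ^ γ)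
        ((K₂ * x ^ γ - c12) - ((K₂ * x ^ γ) - c12)) = 0 := by
      rw [heqb12, heqσ12, lop_calc r b11 σ11 K₂ c12 γ hx]
      have h0 : (K₂ * x ^ γ - c12) - ((K₂ * x ^ γ) - c12) = 0 := by ring
      have hA : 0 ≤ (K₂ * (r - b11*γ + (1/2)*σ11^2*γ*(1-γ)) - 1) * x ^ γ - r * c12 := by
        have h1 : 0 < (K₂ * (r - b11*γ + (1/2)*σ11^2*γ*(1-γ)) - 1) * x ^ γ :=
          mul_pos (by linarith) hxγ
        nlinarith [mul_neg_of_pos_of_neg hr hc12]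
      rw [h0, min_eq_right hA]
    rw [e1]
    rw [max_eq_left (by linarith)]
  · have e1 : min (r * (K₂ * x ^ γ) - Lop b21 σ21 (fun y => K₂ * y ^ γ) x - x ^ γ)
        ((K₂ * x ^ γ) - ((K₂ * x ^ γ - c12) - c21)) = 0 := by
      rw [hf0]
      have hc : r * (K₂ * x ^ γ) = r * (K₂ * x ^ γ - 0) := by ring
      rw [hc, lop_calc r b21 σ21 K₂ 0 γ hx, hK2D21]
      have h0 : (1 - 1) * x ^ γ - r * 0 = 0 := by ring
      rw [h0, min_eq_left (by linarith)]
    rw [e1]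
    rw [max_eq_left (by linarith)]
  · have e1 : min (r * (K₂ * x ^ γ) - Lop b22 σ22 (fun y => K₂ * y ^ γ) x - x ^ γ)
        ((K₂ * x ^ γ) - ((K₂ * x ^ γ - c12) - c21)) = 0 := by
      rw [heqb22, heqσ22, hf0]
      have hc : r * (K₂ * x ^ γ) = r * (K₂ * x ^ γ - 0) := by ring
      rw [hc, lop_calc r b21 σ21 K₂ 0 γ hx, hK2D21]
      have h0 : (1 - 1) * x ^ γ - r * 0 = 0 := by ring
      rw [h0, min_eq_left (by linarith)]
    rw [e1]
    rw [max_eq_left (by linarith)]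
end

section
/- Theorem 4.4, case B1. In addition to the common setup, assume b11 = b21, σ11 = σ21, b12 = b22, σ12 = σ22, and K₁ := K_{11} = K_{21} < K_{12} = K_{22} =: K₂; assume c12 > 0, c21 > 0, χ12 > 0, χ21 > 0 (Condition B1). Let m⁺ := m_{12}⁺ (= m_{22}⁺), x* := (m⁺·χ21 / ((m⁺ − γ)·(K₂ − K₁)))^{1/γ} and A := −(K₂ − K₁)·(γ/m⁺)·(x*)^{γ − m⁺} (these are the smooth-fit relations (K₂ − K₁)(x*)^γ = m⁺χ21/(m⁺ − γ) and A = (K₁ − K₂)(γ/m⁺)(x*)^{γ − m⁺}). Define v11(x) = v21(x) = K₁·x^γ for all x > 0, and v12(x) = v22(x) = K₂·x^γ + A·x^{m⁺} for 0 < x < x* and = K₁·x^γ + χ21 for x ≥ x*. Then this quadruple solves the QVI system at every x > 0 with x ≠ x*. -/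
lemma hasDerivAt_two_pow (a p c q d : ℝ) {y : ℝ} (hy : 0 < y) :
    HasDerivAt (fun z : ℝ => a * z ^ p + c * z ^ q + d)
      (a * (p * y ^ (p-1)) + c * (q * y ^ (q-1))) y := by
  have h1 := (Real.hasDerivAt_rpow_const (p := p) (Or.inl hy.ne')).const_mul a
  have h2 := (Real.hasDerivAt_rpow_const (p := q) (Or.inl hy.ne')).const_mul c
  simpa using (h1.add h2).add_const d

lemma deriv_two_pow (a p c q d : ℝ) {x : ℝ} (hx : 0 < x) :
    deriv (fun z : ℝ => a * z ^ p + c * z ^ q + d)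
      =ᶠ[nhds x] fun y => a * p * y ^ (p-1) + c * q * y ^ (q-1) := by
  filter_upwards [Ioi_mem_nhds hx] with y hy
  rw [(hasDerivAt_two_pow a p c q d hy).deriv]; ring

lemma Lop_congr (b σ : ℝ) {f g : ℝ → ℝ} {x : ℝ} (h : f =ᶠ[nhds x] g) :
    Lop b σ f x = Lop b σ g x := by
  unfold Lop
  rw [h.deriv_eq, (h.deriv).deriv_eq]

lemma Lop_two_pow (b σ a p c q d : ℝ) {x : ℝ} (hx : 0 < x) :
    Lop b σ (fun z : ℝ => a * z ^ p + c * z ^ q + d) x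
      = a * (b * p + σ^2/2 * (p*(p-1))) * x ^ p
        + c * (b * q + σ^2/2 * (q*(q-1))) * x ^ q := by
  have h2 : x ^ (2:ℝ) = x ^ 2 := by
    rw [show (2:ℝ) = ((2:ℕ):ℝ) by norm_num, Real.rpow_natCast]
  have he2p : x^2 * x^(p-2) = x^p := by
    rw [← h2, ← Real.rpow_add hx]; congr 1; ring
  have he2q : x^2 * x^(q-2) = x^q := by
    rw [← h2, ← Real.rpow_add hx]; congr 1; ring
  have he1p : x * x^(p-1) = x^p := by
    nth_rewrite 1 [← Real.rpow_one x]
    rw [← Real.rpow_add hx]; congr 1; ring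
  have he1q : x * x^(q-1) = x^q := by
    nth_rewrite 1 [← Real.rpow_one x]
    rw [← Real.rpow_add hx]; congr 1; ring
  have hd := deriv_two_pow a p c q d hx
  have hdd : deriv (deriv (fun z : ℝ => a * z ^ p + c * z ^ q + d)) x
      = a*p*(p-1)*x^(p-2) + c*q*(q-1)*x^(q-2) := by
    rw [hd.deriv_eq]
    have hfun : (fun y : ℝ => a*p*y^(p-1) + c*q*y^(q-1))
        = fun z : ℝ => (a*p)*z^(p-1) + (c*q)*z^(q-1) + 0 := by funext z; ring
    rw [hfun, (hasDerivAt_two_pow (a*p) (p-1) (c*q) (q-1) 0 hx).deriv]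
    have e1 : p - 1 - 1 = p - 2 := by ring
    have e2 : q - 1 - 1 = q - 2 := by ring
    rw [e1, e2]; ring
  unfold Lop
  rw [hdd, hd.self_of_nhds]
  linear_combination ((1/2)*σ^2*(a*p*(p-1))) * he2p + ((1/2)*σ^2*(c*q*(q-1))) * he2q
    + (b*a*p) * he1p + (b*c*q) * he1q

lemma max_min_eq_zero {P c q : ℝ} (hP : P = 0) (hc : 0 ≤ c) (hq : q ≤ 0) :
    max (min P c) q = 0 := by
  subst hP; rw [min_eq_left hc, max_eq_left hq]

lemma max_min_eq_zero' {P c q : ℝ} (hP : P ≤ 0) (hq : q = 0) :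
    max (min P c) q = 0 := by
  rw [max_eq_right (le_trans (min_le_left _ _) (by linarith))]; exact hq

set_option maxHeartbeats 2000000 in
theorem thm4_4_B1
    (r γ c12 c21 χ12 χ21 : ℝ)
    (b11 σ11 b12 σ12 b21 σ21 b22 σ22 : ℝ)
    (K11 K12 K21 K22 : ℝ)
    (hr : 0 < r) (hγ0 : 0 < γ) (hγ1 : γ < 1)
    (hσ11 : 0 < σ11) (hσ12 : 0 < σ12) (hσ21 : 0 < σ21) (hσ22 : 0 < σ22)
    (hd11 : 0 < r - b11*γ + (1/2)*σ11^2*γ*(1-γ))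
    (hd12 : 0 < r - b12*γ + (1/2)*σ12^2*γ*(1-γ))
    (hd21 : 0 < r - b21*γ + (1/2)*σ21^2*γ*(1-γ))
    (hd22 : 0 < r - b22*γ + (1/2)*σ22^2*γ*(1-γ))
    (hrb11 : b11 < r) (hrb12 : b12 < r) (hrb21 : b21 < r) (hrb22 : b22 < r)
    (hK11 : K11 = 1/(r - b11*γ + (1/2)*σ11^2*γ*(1-γ)))
    (hK12 : K12 = 1/(r - b12*γ + (1/2)*σ12^2*γ*(1-γ)))
    (hK21 : K21 = 1/(r - b21*γ + (1/2)*σ21^2*γ*(1-γ)))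
    (hK22 : K22 = 1/(r - b22*γ + (1/2)*σ22^2*γ*(1-γ)))
    (heqb21 : b21 = b11) (heqσ21 : σ21 = σ11)
    (heqb22 : b22 = b12) (heqσ22 : σ22 = σ12)
    (K₁ K₂ : ℝ) (hK₁ : K₁ = K11) (hK₂ : K₂ = K12)
    (hKlt : K₁ < K₂)
    (m : ℝ) (hm : m = 1/2 - b12/σ12^2 + Real.sqrt ((1/2 - b12/σ12^2)^2 + 2*r/σ12^2))
    (xs A : ℝ)
    (hxs : xs = (m * χ21 / ((m - γ) * (K₂ - K₁))) ^ (1/γ))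
    (hA : A = -(K₂ - K₁) * (γ / m) * xs ^ (γ - m))
    (hc12 : 0 < c12) (hc21 : 0 < c21) (hχ12 : 0 < χ12) (hχ21 : 0 < χ21)
    :
    ∀ x : ℝ, 0 < x → x ≠ xs →
      solvesQVI r γ c12 c21 χ12 χ21 b11 σ11 b12 σ12 b21 σ21 b22 σ22
        (fun y => K₁ * y ^ γ)
        (fun y => if y < xs then K₂ * y ^ γ + A * y ^ m else K₁ * y ^ γ + χ21)
        (fun y => K₁ * y ^ γ)
        (fun y => if y < xs then K₂ * y ^ γ + A * y ^ m else K₁ * y ^ γ + χ21) x := by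
  intro x hx hne
  rw [heqb21, heqσ21, heqb22, heqσ22]
  -- basic scalar facts
  have hσ2 : (0:ℝ) < σ12^2 := by positivity
  have hK1D1 : K₁ * (r - b11*γ + (1/2)*σ11^2*γ*(1-γ)) = 1 := by
    rw [hK₁, hK11, one_div, inv_mul_cancel₀ hd11.ne']
  have hK2D2 : K₂ * (r - b12*γ + (1/2)*σ12^2*γ*(1-γ)) = 1 := by
    rw [hK₂, hK12, one_div, inv_mul_cancel₀ hd12.ne']
  have hΔ : 0 < K₂ - K₁ := sub_pos.mpr hKlt
  obtain ⟨s, hs⟩ : ∃ t : ℝ, t = 1/2 - b12/σ12^2 := ⟨_, rfl⟩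
  rw [← hs] at hm
  obtain ⟨R, hRdef⟩ : ∃ t : ℝ, t = Real.sqrt (s^2 + 2*r/σ12^2) := ⟨_, rfl⟩
  rw [← hRdef] at hm
  have hRpos : 0 < R := by rw [hRdef]; exact Real.sqrt_pos.mpr (by positivity)
  have hR2 : R^2 = s^2 + 2*r/σ12^2 := by rw [hRdef]; exact Real.sq_sqrt (by positivity)
  have hR2' : σ12^2 * R^2 = σ12^2 * s^2 + 2*r := by
    rw [hR2]; field_simp
  have hs' : σ12^2 * s = σ12^2/2 - b12 := by rw [hs]; field_simp
  have hmchar : σ12^2/2*(m*(m-1)) + b12*m = r := by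
    rw [hm]; linear_combination (1/2)*hR2' + (R+s)*hs'
  have habs : |s| < R := by
    rw [← Real.sqrt_sq_eq_abs, hRdef]
    refine Real.sqrt_lt_sqrt (sq_nonneg s) ?_
    have h0 : 0 < 2*r/σ12^2 := by positivity
    linarith
  have hmpos : 0 < m := by
    have := neg_abs_le s; rw [hm]; linarith
  have hmγ : γ < m := by
    rcases le_or_gt γ s with h | h
    · rw [hm]; linarith
    · have key : σ12^2 * ((γ-s)^2) < σ12^2 * (s^2 + 2*r/σ12^2) := by
        have expand : σ12^2 * (s^2 + 2*r/σ12^2) = σ12^2*s^2 + 2*r := by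
          field_simp
        rw [expand]
        have e : σ12^2*((γ-s)^2)
            = σ12^2*s^2 + σ12^2*γ*γ - (σ12^2/2 - b12)*(2*γ) := by
          linear_combination (-2*γ)*hs'
        rw [e]; linarith [hd12]
      have h2 : (γ-s)^2 < s^2 + 2*r/σ12^2 := (mul_lt_mul_iff_right₀ hσ2).mp key
      have := Real.lt_sqrt_of_sq_lt h2
      rw [hm]; linarith
  have hmγ' : 0 < m - γ := sub_pos.mpr hmγ
  -- xs facts
  have hCpos : (0:ℝ) < m*χ21/((m-γ)*(K₂-K₁)) :=
    div_pos (mul_pos hmpos hχ21) (mul_pos hmγ' hΔ)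
  have hxspos : 0 < xs := by rw [hxs]; exact Real.rpow_pos_of_pos hCpos _
  have hxsγ : xs ^ γ = m*χ21/((m-γ)*(K₂-K₁)) := by
    rw [hxs, ← Real.rpow_mul hCpos.le, one_div_mul_cancel hγ0.ne', Real.rpow_one]
  have hfit : (K₂ - K₁) * xs^γ * (m - γ) = m * χ21 := by
    have h0 : (m-γ)*(K₂-K₁) ≠ 0 := (mul_pos hmγ' hΔ).ne'
    rw [hxsγ]; field_simp [h0]
  -- PDE identity in regime 1
  have hfun1 : (fun y : ℝ => K₁ * y ^ γ) = fun z : ℝ => K₁*z^γ + 0*z^γ + 0 :=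
    funext fun z => by ring
  have hLop1 : Lop b11 σ11 (fun y : ℝ => K₁*y^γ) x
      = K₁*(b11*γ + σ11^2/2*(γ*(γ-1)))*x^γ := by
    rw [hfun1, Lop_two_pow _ _ _ _ _ _ _ hx]; ring
  have hP1 : r*(K₁*x^γ) - Lop b11 σ11 (fun y : ℝ => K₁*y^γ) x - x^γ = 0 := by
    rw [hLop1]; linear_combination (x^γ)*hK1D1
  have hc12' : (0:ℝ) ≤ K₁*x^γ - (K₁*x^γ - c12) := by linarith
  have hc21' : (0:ℝ) ≤ K₁*x^γ - (K₁*x^γ - c21) := by linarith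
  rcases hne.lt_or_gt with hlt | hgt
  · -- case x < xs
    have hρ0 : 0 < x/xs := div_pos hx hxspos
    have hρ1 : x/xs < 1 := (div_lt_one hxspos).mpr hlt
    have hxγ' : x ^ γ = xs ^ γ * (x/xs) ^ γ := by
      rw [← Real.mul_rpow hxspos.le hρ0.le]
      congr 1; field_simp
    have hxm' : x ^ m = xs ^ m * (x/xs) ^ m := by
      rw [← Real.mul_rpow hxspos.le hρ0.le]
      congr 1; field_simp
    have hpow : xs^(γ-m) * xs^m = xs^γ := by
      rw [← Real.rpow_add hxspos]; congr 1; ring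
    have hv2v1 : K₂*x^γ + A*x^m - K₁*x^γ
        = (K₂-K₁) * xs^γ * ((x/xs)^γ - (γ/m)*(x/xs)^m) := by
      rw [hA, hxγ', hxm']
      linear_combination (-(K₂-K₁)*(γ/m)*(x/xs)^m) * hpow
    have hγm1 : γ/m ≤ 1 := (div_le_one hmpos).mpr hmγ.le
    have hkey : (x/xs)^γ ≤ (γ/m) * (x/xs)^m + (1 - γ/m) := by
      have hg := Real.geom_mean_le_arith_mean2_weighted
        (by positivity : (0:ℝ) ≤ γ/m) (by linarith : (0:ℝ) ≤ 1 - γ/m)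
        (Real.rpow_nonneg hρ0.le m) zero_le_one (by ring)
      rw [Real.one_rpow, mul_one, mul_one] at hg
      have hpp : ((x/xs)^m)^(γ/m) = (x/xs)^γ := by
        rw [← Real.rpow_mul hρ0.le]; congr 1; field_simp
      rw [hpp] at hg; linarith
    have hρmγ : (x/xs)^m ≤ (x/xs)^γ :=
      Real.rpow_le_rpow_of_exponent_ge hρ0 hρ1.le hmγ.le
    have hρm_nonneg : 0 ≤ (x/xs)^m := Real.rpow_nonneg hρ0.le m
    have hbr_nonneg : 0 ≤ (x/xs)^γ - (γ/m)*(x/xs)^m := by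
      have h1 : (γ/m)*(x/xs)^m ≤ (x/xs)^m :=
        mul_le_of_le_one_left hρm_nonneg hγm1
      linarith [hρmγ]
    have hpos : 0 ≤ (K₂-K₁)*xs^γ :=
      mul_nonneg hΔ.le (Real.rpow_nonneg hxspos.le γ)
    have hfit' : (K₂-K₁)*xs^γ*(1-γ/m) = χ21 := by
      field_simp
      linear_combination hfit
    have hgle : K₂*x^γ + A*x^m - (K₁*x^γ + χ21) ≤ 0 := by
      have hb : (x/xs)^γ - (γ/m)*(x/xs)^m ≤ 1 - γ/m := by linarith
      have h1 : (K₂-K₁)*xs^γ*((x/xs)^γ - (γ/m)*(x/xs)^m)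
          ≤ (K₂-K₁)*xs^γ*(1-γ/m) := mul_le_mul_of_nonneg_left hb hpos
      linarith [hv2v1, h1, hfit']
    have hgge : 0 ≤ K₂*x^γ + A*x^m - K₁*x^γ := by
      rw [hv2v1]; exact mul_nonneg hpos hbr_nonneg
    -- PDE in regime 2
    have hbranch : (fun y : ℝ => if y < xs then K₂*y^γ + A*y^m else K₁*y^γ + χ21)
        =ᶠ[nhds x] fun z : ℝ => K₂*z^γ + A*z^m + 0 := by
      filter_upwards [Iio_mem_nhds hlt] with y hy
      simp only [Set.mem_Iio] at hy
      rw [if_pos hy]; ring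
    have hLop2 : Lop b12 σ12
        (fun y : ℝ => if y < xs then K₂*y^γ + A*y^m else K₁*y^γ + χ21) x
        = K₂*(b12*γ + σ12^2/2*(γ*(γ-1)))*x^γ + A*(b12*m + σ12^2/2*(m*(m-1)))*x^m := by
      rw [Lop_congr _ _ hbranch, Lop_two_pow _ _ _ _ _ _ _ hx]
    have hP2 : r * (if x < xs then K₂*x^γ + A*x^m else K₁*x^γ + χ21)
        - Lop b12 σ12
          (fun y : ℝ => if y < xs then K₂*y^γ + A*y^m else K₁*y^γ + χ21) x
        - x^γ = 0 := by
      rw [if_pos hlt, hLop2]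
      linear_combination (x^γ)*hK2D2 - (A*x^m)*hmchar
    have hq1 : K₁*x^γ - ((if x < xs then K₂*x^γ + A*x^m else K₁*x^γ + χ21) + χ12) ≤ 0 := by
      rw [if_pos hlt]; linarith
    have hq2 : (if x < xs then K₂*x^γ + A*x^m else K₁*x^γ + χ21) - (K₁*x^γ + χ21) ≤ 0 := by
      rw [if_pos hlt]; linarith
    have hcq : (0:ℝ) ≤ (if x < xs then K₂*x^γ + A*x^m else K₁*x^γ + χ21)
        - ((if x < xs then K₂*x^γ + A*x^m else K₁*x^γ + χ21) - c12) := by linarith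
    have hcq' : (0:ℝ) ≤ (if x < xs then K₂*x^γ + A*x^m else K₁*x^γ + χ21)
        - ((if x < xs then K₂*x^γ + A*x^m else K₁*x^γ + χ21) - c21) := by linarith
    exact ⟨max_min_eq_zero hP1 hc12' hq1, max_min_eq_zero hP2 hcq hq2,
      max_min_eq_zero hP1 hc21' hq1, max_min_eq_zero hP2 hcq' hq2⟩
  · -- case xs < x
    have hge : ¬ x < xs := not_lt.mpr hgt.le
    have hbranch : (fun y : ℝ => if y < xs then K₂*y^γ + A*y^m else K₁*y^γ + χ21)
        =ᶠ[nhds x] fun z : ℝ => K₁*z^γ + 0*z^m + χ21 := by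
      filter_upwards [Ioi_mem_nhds hgt] with y hy
      simp only [Set.mem_Ioi] at hy
      rw [if_neg (not_lt.mpr hy.le)]; ring
    have hLop2 : Lop b12 σ12
        (fun y : ℝ => if y < xs then K₂*y^γ + A*y^m else K₁*y^γ + χ21) x
        = K₁*(b12*γ + σ12^2/2*(γ*(γ-1)))*x^γ := by
      rw [Lop_congr _ _ hbranch, Lop_two_pow _ _ _ _ _ _ _ hx]; ring
    have hxsx : xs^γ ≤ x^γ := Real.rpow_le_rpow hxspos.le hgt.le hγ0.le
    have key : (r - b12*γ + (1/2)*σ12^2*γ*(1-γ))*m - r*(m-γ)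
        = σ12^2/2*γ*(m*(m-γ)) := by linear_combination (-γ)*hmchar
    have key' : (r - b12*γ + (1/2)*σ12^2*γ*(1-γ))*(m*χ21)
        = r*χ21*(m-γ) + σ12^2/2*γ*(m*(m-γ))*χ21 := by linear_combination χ21*key
    have hq : 0 ≤ σ12^2/2*γ*(m*(m-γ))*χ21 :=
      mul_nonneg (mul_nonneg (mul_nonneg (by positivity) hγ0.le)
        (mul_nonneg hmpos.le hmγ'.le)) hχ21.le
    have e2 : (K₂-K₁)*(r - b12*γ + (1/2)*σ12^2*γ*(1-γ))*xs^γ*(m-γ)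
        = (r - b12*γ + (1/2)*σ12^2*γ*(1-γ))*(m*χ21) := by
      linear_combination (r - b12*γ + (1/2)*σ12^2*γ*(1-γ))*hfit
    have h2 : r*χ21*(m-γ) ≤ (K₂-K₁)*(r - b12*γ + (1/2)*σ12^2*γ*(1-γ))*xs^γ*(m-γ) := by
      linarith [e2, key', hq]
    have h3 : r*χ21 ≤ (K₂-K₁)*(r - b12*γ + (1/2)*σ12^2*γ*(1-γ))*xs^γ :=
      le_of_mul_le_mul_right (by linarith [h2]) hmγ'
    have h1 : (K₂-K₁)*(r - b12*γ + (1/2)*σ12^2*γ*(1-γ))*xs^γ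
        ≤ (K₂-K₁)*(r - b12*γ + (1/2)*σ12^2*γ*(1-γ))*x^γ :=
      mul_le_mul_of_nonneg_left hxsx (mul_nonneg hΔ.le hd12.le)
    have hP2 : r * (if x < xs then K₂*x^γ + A*x^m else K₁*x^γ + χ21)
        - Lop b12 σ12
          (fun y : ℝ => if y < xs then K₂*y^γ + A*y^m else K₁*y^γ + χ21) x
        - x^γ ≤ 0 := by
      rw [if_neg hge, hLop2]
      have e : r*(K₁*x^γ + χ21) - K₁*(b12*γ + σ12^2/2*(γ*(γ-1)))*x^γ - x^γ
          = -((K₂-K₁)*(r - b12*γ + (1/2)*σ12^2*γ*(1-γ)))*x^γ + r*χ21 := by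
        linear_combination (x^γ)*hK2D2
      rw [e]; linarith [h1, h3]
    have hq2 : (if x < xs then K₂*x^γ + A*x^m else K₁*x^γ + χ21) - (K₁*x^γ + χ21) = 0 := by
      rw [if_neg hge]; ring
    have hq1 : K₁*x^γ - ((if x < xs then K₂*x^γ + A*x^m else K₁*x^γ + χ21) + χ12) ≤ 0 := by
      rw [if_neg hge]; linarith
    exact ⟨max_min_eq_zero hP1 hc12' hq1, max_min_eq_zero' hP2 hq2,
      max_min_eq_zero hP1 hc21' hq1, max_min_eq_zero' hP2 hq2⟩
end
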